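/- Let d be a finite index set with |d| ≥ 2, A ≠ 0 a real number, γ_j real numbers for j ∈ d, and for each nonempty subset x ⊆ d let c_x be a real number (representing I_k(x)/n). Define γ = Σ_{k=1}^{|d|} (-1)^{k-1} Σ_{|x|=k} c_x, and assume c_{{j}} = γ_j for singletons. Then the equation 1 - γ/A = ∏_{j ∈ d} (1 - γ_j/A) holds if and only if Σ_{k=2}^{|d|} (-1)^k Σ_{x ⊆ d, |x| = k} ( c_x - (∏_{j ∈ x} γ_j)/A^{k-1} ) = 0. -/

import Mathlib

theorem stmt_2 {α : Type*} [DecidableEq α] (d : Finset α) (hd : 2 ≤ d.card)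
    (A : ℝ) (hA : A ≠ 0) (γ : α → ℝ) (c : Finset α → ℝ)
    (hsingle : ∀ j ∈ d, c {j} = γ j) :
    (1 - (∑ k ∈ Finset.Icc 1 d.card, (-1 : ℝ) ^ (k - 1) *
        ∑ x ∈ d.powerset.filter (fun x => x.card = k), c x) / A =
      ∏ j ∈ d, (1 - γ j / A)) ↔
    ∑ k ∈ Finset.Icc 2 d.card, (-1 : ℝ) ^ k *
        ∑ x ∈ d.powerset.filter (fun x => x.card = k),
          (c x - (∏ j ∈ x, γ j) / A ^ (k - 1)) = 0 := by
  set n := d.card with hn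
  -- abbreviations
  set C : ℕ → ℝ := fun k => ∑ x ∈ d.powerset.filter (fun x => x.card = k), c x with hC
  set G : ℕ → ℝ := fun k =>
    ∑ x ∈ d.powerset.filter (fun x => x.card = k), (∏ j ∈ x, γ j) / A ^ (k - 1) with hG
  -- product expansion
  have hprod : ∏ j ∈ d, (1 - γ j / A) =
      ∑ k ∈ Finset.range (n + 1), (-1 : ℝ) ^ k *
        ∑ x ∈ d.powerset.filter (fun x => x.card = k), (∏ j ∈ x, γ j) / A ^ k := by
    have h1 : ∀ j ∈ d, (1 - γ j / A) = (-(γ j / A) + 1) := by intro j _; ring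
    rw [Finset.prod_congr rfl h1, Finset.prod_add]
    have h2 : ∀ t ∈ d.powerset, (∏ i ∈ t, -(γ i / A)) * ∏ _i ∈ d \ t, (1 : ℝ) =
        (-1 : ℝ) ^ t.card * ((∏ j ∈ t, γ j) / A ^ t.card) := by
      intro t _
      rw [Finset.prod_const_one, mul_one]
      calc ∏ i ∈ t, -(γ i / A) = ∏ i ∈ t, ((-1 : ℝ) * (γ i / A)) := by
            apply Finset.prod_congr rfl; intro i _; ring
        _ = ((-1 : ℝ) ^ t.card) * ∏ i ∈ t, (γ i / A) := by
            rw [Finset.prod_mul_distrib, Finset.prod_const]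
        _ = (-1 : ℝ) ^ t.card * ((∏ j ∈ t, γ j) / A ^ t.card) := by
            rw [Finset.prod_div_distrib, Finset.prod_const]
    rw [Finset.sum_congr rfl h2, Finset.sum_powerset]
    apply Finset.sum_congr rfl
    intro k _
    rw [Finset.powersetCard_eq_filter, Finset.mul_sum]
    apply Finset.sum_congr rfl
    intro x hx
    simp only [Finset.mem_filter] at hx
    rw [hx.2]
  -- split range (n+1) = insert 0 (Icc 1 n)
  have hr : Finset.range (n + 1) = insert 0 (Finset.Icc 1 n) := by
    ext m; simp [Nat.lt_succ_iff]; omega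
  have h0 : d.powerset.filter (fun x => x.card = 0) = {∅} := by
    ext x
    simp [Finset.card_eq_zero]
    rintro rfl; exact Finset.empty_subset d
  have hprod2 : ∏ j ∈ d, (1 - γ j / A) =
      1 + ∑ k ∈ Finset.Icc 1 n, (-1 : ℝ) ^ k *
        ∑ x ∈ d.powerset.filter (fun x => x.card = k), (∏ j ∈ x, γ j) / A ^ k := by
    rw [hprod, hr, Finset.sum_insert (by simp), h0]
    simp
  -- first equivalence: multiply by A
  have key1 : (1 - (∑ k ∈ Finset.Icc 1 n, (-1 : ℝ) ^ (k - 1) * C k) / A =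
      ∏ j ∈ d, (1 - γ j / A)) ↔
      (∑ k ∈ Finset.Icc 1 n, (-1 : ℝ) ^ k * C k =
       ∑ k ∈ Finset.Icc 1 n, (-1 : ℝ) ^ k * G k) := by
    rw [hprod2]
    have hGA : ∀ k ∈ Finset.Icc 1 n,
        ((-1 : ℝ) ^ k * ∑ x ∈ d.powerset.filter (fun x => x.card = k),
          (∏ j ∈ x, γ j) / A ^ k) * A = (-1 : ℝ) ^ k * G k := by
      intro k hk
      simp only [Finset.mem_Icc] at hk
      rw [mul_assoc, Finset.sum_mul]
      congr 1
      apply Finset.sum_congr rfl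
      intro x _
      have : A ^ k = A ^ (k - 1) * A := by
        rw [← pow_succ]; congr 1; omega
      rw [this]
      field_simp
    have hCk : ∀ k ∈ Finset.Icc 1 n,
        -((-1 : ℝ) ^ (k - 1) * C k) = (-1 : ℝ) ^ k * C k := by
      intro k hk
      simp only [Finset.mem_Icc] at hk
      have h2 : (-1 : ℝ) ^ k = (-1 : ℝ) ^ (k - 1) * (-1) := by
        rw [← pow_succ]; congr 1; omega
      rw [h2]; ring
    constructor
    · intro h
      have h' : -(∑ k ∈ Finset.Icc 1 n, (-1 : ℝ) ^ (k - 1) * C k) =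
          (∑ k ∈ Finset.Icc 1 n, (-1 : ℝ) ^ k *
            ∑ x ∈ d.powerset.filter (fun x => x.card = k), (∏ j ∈ x, γ j) / A ^ k) * A := by
        field_simp at h
        linarith [h]
      rw [← Finset.sum_neg_distrib, Finset.sum_congr rfl hCk] at h'
      rw [Finset.sum_mul, Finset.sum_congr rfl hGA] at h'
      exact h'
    · intro h
      have h' : -(∑ k ∈ Finset.Icc 1 n, (-1 : ℝ) ^ (k - 1) * C k) =
          (∑ k ∈ Finset.Icc 1 n, (-1 : ℝ) ^ k *
            ∑ x ∈ d.powerset.filter (fun x => x.card = k), (∏ j ∈ x, γ j) / A ^ k) * A := by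
        rw [← Finset.sum_neg_distrib, Finset.sum_congr rfl hCk]
        rw [Finset.sum_mul, Finset.sum_congr rfl hGA]
        exact h
      field_simp
      linarith [h']
  -- the k = 1 terms agree
  have h1eq : C 1 = G 1 := by
    apply Finset.sum_congr rfl
    intro x hx
    simp only [Finset.mem_filter, Finset.mem_powerset] at hx
    obtain ⟨j, rfl⟩ := Finset.card_eq_one.mp hx.2
    have hj : j ∈ d := hx.1 (Finset.mem_singleton_self j)
    simp [hsingle j hj]
  -- split Icc 1 n = insert 1 (Icc 2 n)
  have hi : Finset.Icc 1 n = insert 1 (Finset.Icc 2 n) := by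
    ext m; simp; omega
  have key2 : (∑ k ∈ Finset.Icc 1 n, (-1 : ℝ) ^ k * C k =
       ∑ k ∈ Finset.Icc 1 n, (-1 : ℝ) ^ k * G k) ↔
      ∑ k ∈ Finset.Icc 2 n, (-1 : ℝ) ^ k *
        ∑ x ∈ d.powerset.filter (fun x => x.card = k),
          (c x - (∏ j ∈ x, γ j) / A ^ (k - 1)) = 0 := by
    rw [hi, Finset.sum_insert (by simp), Finset.sum_insert (by simp), h1eq,
      add_right_inj]
    have : ∀ k ∈ Finset.Icc 2 n, (-1 : ℝ) ^ k *
        ∑ x ∈ d.powerset.filter (fun x => x.card = k),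
          (c x - (∏ j ∈ x, γ j) / A ^ (k - 1)) =
        (-1 : ℝ) ^ k * C k - (-1 : ℝ) ^ k * G k := by
      intro k _
      rw [Finset.sum_sub_distrib, mul_sub]
    rw [Finset.sum_congr rfl this, Finset.sum_sub_distrib, sub_eq_zero]
  exact key1.trans key2
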